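/- Let R be a finitely generated ℤ-algebra and let a, b ∈ R. If a ≡ b (mod I) for every ideal I of R of finite index (i.e., R/I is finite), then a = b. -/

import Mathlib

theorem int_isJacobson : IsJacobsonRing ℤ := by
  rw [isJacobsonRing_iff_prime_eq]
  intro P hP
  by_cases hbot : P = ⊥
  · subst hbot
    refine le_antisymm (fun x hx => ?_) Ideal.le_jacobson
    rw [Ideal.mem_jacobson_bot] at hx
    have h1 := hx 1
    have h2 := hx (-1)
    rw [Int.isUnit_iff] at h1 h2
    simpa using by omega
  · haveI := hP
    exact Ideal.jacobson_eq_self_of_isMaximal (H := IsPrime.to_maximal_ideal hbot)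

theorem finite_of_field_surj (F : Type*) [Field F] (n : ℕ)
    (f : MvPolynomial (Fin n) ℤ →+* F) (hf : Function.Surjective f) : Finite F := by
  haveI : IsJacobsonRing ℤ := int_isJacobson
  haveI : Algebra.FiniteType ℤ F :=
    @Algebra.FiniteType.of_surjective _ _ _ _ _ _ _ _ (Algebra.FiniteType.iff_quotient_mvPolynomial''.mpr
      ⟨n, AlgHom.id ℤ _, Function.surjective_id⟩)
      f.toIntAlgHom hf
  haveI : Module.Finite ℤ F := finite_of_finite_type_of_isJacobsonRing ℤ F
  rcases CharP.char_is_prime_or_zero F (ringChar F) with hp | h0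
  · haveI : Fact (ringChar F).Prime := ⟨hp⟩
    haveI := ringChar.charP F
    letI : Algebra (ZMod (ringChar F)) F := ZMod.algebra F (ringChar F)
    haveI := Module.Finite.of_restrictScalars_finite ℤ (ZMod (ringChar F)) F
    exact Module.finite_of_finite (ZMod (ringChar F))
  · exfalso
    haveI : CharP F 0 := h0 ▸ ringChar.charP F
    haveI : CharZero F := CharP.charP_to_charZero F
    haveI : Algebra.IsIntegral ℤ F := Algebra.IsIntegral.of_finite ℤ F
    have hint : IsIntegral ℤ ((algebraMap ℚ F) (1/2)) :=
      Algebra.IsIntegral.isIntegral (R := ℤ) _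
    rw [isIntegral_algebraMap_iff ((algebraMap ℚ F).injective)] at hint
    obtain ⟨y, hy⟩ := IsIntegrallyClosed.isIntegral_iff.mp hint
    have : (y : ℚ) = 1/2 := hy
    have h2 : ((2 * y : ℤ) : ℚ) = ((1 : ℤ) : ℚ) := by push_cast; linarith
    have := Int.cast_injective (α := ℚ) h2
    omega

theorem finite_of_torsion (A : Type*) [CommRing A] (J : Ideal A) [Finite (A ⧸ J)]
    (M : Type*) [AddCommGroup M] [Module A M] [Module.Finite A M]
    (htor : Module.IsTorsionBySet A M J) : Finite M := by
  letI : Module (A ⧸ J) M := htor.module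
  haveI : IsScalarTower A (A ⧸ J) M := htor.isScalarTower
  haveI : Module.Finite (A ⧸ J) M := Module.Finite.of_restrictScalars_finite A (A ⧸ J) M
  exact Module.finite_of_finite (A ⧸ J)

theorem stmt_0 (R : Type*) [CommRing R] [Algebra ℤ R] [Algebra.FiniteType ℤ R]
    (a b : R) (h : ∀ I : Ideal R, Finite (R ⧸ I) → a - b ∈ I) : a = b := by
  obtain ⟨n, f, hf⟩ := Algebra.FiniteType.iff_quotient_mvPolynomial''.mp
    ‹Algebra.FiniteType ℤ R›
  haveI : IsNoetherianRing R :=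
    isNoetherianRing_of_surjective (MvPolynomial (Fin n) ℤ) R f.toRingHom hf
  by_contra hne
  have hx : a - b ≠ 0 := sub_ne_zero.mpr hne
  obtain ⟨I, hIx, hImax⟩ : ∃ I : Ideal R, (a - b) ∉ I ∧ ∀ J : Ideal R, I < J → (a - b) ∈ J := by
    obtain ⟨I, hI, hmax⟩ := set_has_maximal_iff_noetherian.mpr inferInstance
      {J : Ideal R | (a - b) ∉ J} ⟨⊥, by simpa using hx⟩
    exact ⟨I, hI, fun J hJ => by_contra fun hJx => hmax J hJx hJ⟩
  refine hIx (h I ?_)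
  set S := R ⧸ I with hS
  haveI : IsNoetherianRing S :=
    isNoetherianRing_of_surjective R S (Ideal.Quotient.mk I) Ideal.Quotient.mk_surjective
  set x : S := Ideal.Quotient.mk I (a - b) with hxdef
  have hx0 : x ≠ 0 := fun h0 => hIx (Ideal.Quotient.eq_zero_iff_mem.mp h0)
  have key : ∀ J : Ideal S, J ≠ ⊥ → x ∈ J := by
    intro J hJ
    have hcomap : I ≤ J.comap (Ideal.Quotient.mk I) := fun r hr => by
      have : Ideal.Quotient.mk I r = 0 := Ideal.Quotient.eq_zero_iff_mem.mpr hr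
      simp [Ideal.mem_comap, this]
    have hlt : I < J.comap (Ideal.Quotient.mk I) := by
      rcases hcomap.lt_or_eq with h' | h'
      · exact h'
      · exfalso
        apply hJ
        have hmc := Ideal.map_comap_of_surjective _ Ideal.Quotient.mk_surjective J
        rw [← hmc, ← h', Ideal.map_quotient_self]
    exact hImax _ hlt
  set m : Ideal S := Ideal.torsionOf S S x with hm
  have hmem : ∀ s : S, s ∈ m ↔ s * x = 0 := fun s => by
    rw [hm, Ideal.mem_torsionOf_iff, smul_eq_mul]
  have hmne : (1 : S) ∉ m := fun h1 => hx0 (by simpa using (hmem 1).mp h1)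
  have hmmax : m.IsMaximal := by
    rw [Ideal.isMaximal_iff]
    refine ⟨hmne, fun J s hmJ hsm hsJ => ?_⟩
    have hsx : s * x ≠ 0 := fun h0 => hsm ((hmem s).mpr h0)
    have hxsp : x ∈ Ideal.span {s * x} :=
      key _ (by simpa [Ideal.span_singleton_eq_bot] using hsx)
    obtain ⟨t, ht⟩ := Ideal.mem_span_singleton'.mp hxsp
    have h1m : 1 - t * s ∈ m := (hmem _).mpr
      (by rw [sub_mul, one_mul, mul_assoc, ht, sub_self])
    have := J.add_mem (hmJ h1m) (J.mul_mem_left t hsJ)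
    simpa using this
  haveI := hmmax
  have hpow : ∃ k : ℕ, m ^ k = ⊥ := by
    by_contra hc
    push_neg at hc
    have hxin : x ∈ (⨅ i : ℕ, m ^ i • (⊤ : Submodule S S)) := by
      rw [Submodule.mem_iInf]
      intro i
      rw [smul_eq_mul, Ideal.mul_top]
      exact key _ (hc i)
    obtain ⟨r, hr⟩ := (Ideal.mem_iInf_smul_pow_eq_bot_iff m x).mp hxin
    rw [smul_eq_mul] at hr
    have h1r : 1 - (r : S) ∈ m := (hmem _).mpr (by rw [sub_mul, one_mul, hr, sub_self])
    have h1 : (1 : S) ∈ m := by simpa using m.add_mem h1r r.2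
    exact hmne h1
  obtain ⟨k, hk⟩ := hpow
  letI : Field (S ⧸ m) := Ideal.Quotient.field m
  have hFm : Finite (S ⧸ m) := by
    refine finite_of_field_surj _ n
      (((Ideal.Quotient.mk m).comp (Ideal.Quotient.mk I)).comp f.toRingHom) ?_
    exact Ideal.Quotient.mk_surjective.comp (Ideal.Quotient.mk_surjective.comp hf)
  have hfin : ∀ j : ℕ, Finite (S ⧸ m ^ j) := by
    intro j
    induction j with
    | zero =>
      rw [pow_zero, Ideal.one_eq_top]
      have : Subsingleton (S ⧸ (⊤ : Ideal S)) := Ideal.Quotient.subsingleton_iff.mpr rfl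
      exact Finite.of_subsingleton
    | succ j ih =>
      set T := S ⧸ m ^ (j + 1) with hT
      haveI : IsNoetherianRing T :=
        isNoetherianRing_of_surjective S T (Ideal.Quotient.mk _) Ideal.Quotient.mk_surjective
      set π := Ideal.Quotient.mk (m ^ (j + 1)) with hπ
      set K : Ideal T := (m ^ j).map π with hK
      have hle : m ^ (j + 1) ≤ m ^ j := Ideal.pow_le_pow_right (Nat.le_succ j)
      have hQK : Finite (T ⧸ K) := by
        have e := DoubleQuot.quotQuotEquivQuotOfLE hle
        exact Finite.of_equiv _ e.symm.toEquiv
      have hKfin : Finite K := by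
        set mT : Ideal T := m.map π with hmT
        have hator : Module.IsTorsionBySet T K mT := by
          rintro ⟨y, hy⟩ ⟨s, hs⟩
          obtain ⟨u, hu, rfl⟩ := Ideal.mem_map_iff_of_surjective _
            Ideal.Quotient.mk_surjective |>.mp hs
          obtain ⟨v, hv, rfl⟩ := Ideal.mem_map_iff_of_surjective _
            Ideal.Quotient.mk_surjective |>.mp hy
          apply Subtype.ext
          show π u • π v = 0
          rw [smul_eq_mul, ← map_mul]
          refine Ideal.Quotient.eq_zero_iff_mem.mpr ?_
          rw [pow_succ]
          have := Ideal.mul_mem_mul hv hu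
          simpa [mul_comm] using this
        haveI : Module.Finite T K := Module.Finite.iff_fg.mpr (IsNoetherian.noetherian K)
        haveI hTm : Finite (T ⧸ mT) := by
          have e := DoubleQuot.quotQuotEquivQuotOfLE
            (Ideal.pow_le_self (Nat.succ_ne_zero j) (I := m))
          exact Finite.of_equiv _ e.symm.toEquiv
        exact finite_of_torsion T mT K hator
      exact Finite.of_ideal_quotient K
  have hfb : Finite (S ⧸ (⊥ : Ideal S)) := hk ▸ hfin k
  have inj : Function.Injective (Ideal.Quotient.mk (⊥ : Ideal S)) := by
    rw [RingHom.injective_iff_ker_eq_bot, Ideal.mk_ker]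
  exact Finite.of_injective _ inj
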